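/- arXiv:2103.12586 — 3 statements merged into one kernel-verified Lean document; each statement's English description precedes it below -/
import Mathlib

section
/- For every z in the complex strip -1 < Re(z) < 0 and every τ > 0, the integral of u^z e^{-τu} e^{-iux} over u ∈ (0,∞) equals Γ(z+1)/(i(x - iτ))^{z+1}, where the complex power uses the branch with -π < arg(x - iτ) < 0. -/
open MeasureTheory Complex Set Metric Filter

private lemma key_integrable {c : ℝ} (hc : 0 < c) {r : ℝ} (hr : -1 < r) :
    IntegrableOn (fun u : ℝ => u ^ r * Real.exp (-c * u)) (Set.Ioi 0) := by
  have := integrableOn_rpow_mul_exp_neg_mul_rpow hr zero_lt_one hc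
  simpa using this


private lemma meas_aux (z : ℂ) (s : ℂ) :
    AEStronglyMeasurable (fun u : ℝ => (u : ℂ) ^ z * Complex.exp (-s * u))
      (volume.restrict (Set.Ioi 0)) := by
  refine ContinuousOn.aestronglyMeasurable ?_ measurableSet_Ioi
  apply ContinuousOn.mul
  · apply continuousOn_of_forall_continuousAt
    intro u hu
    exact (continuousAt_cpow_const (Complex.ofReal_mem_slitPlane.2 hu)).comp
      Complex.continuous_ofReal.continuousAt
  · exact (Complex.continuous_exp.comp
      (continuous_const.mul Complex.continuous_ofReal)).continuousOn

private lemma meas_aux' (z : ℂ) (s : ℂ) :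
    AEStronglyMeasurable (fun u : ℝ => (u : ℂ) ^ z * (Complex.exp (-s * u) * (-(u:ℂ))))
      (volume.restrict (Set.Ioi 0)) := by
  have h1 := (meas_aux z s).mul
    (Complex.continuous_ofReal.neg.aestronglyMeasurable.restrict)
  refine h1.congr (Filter.Eventually.of_forall fun u => ?_)
  simp only [Pi.mul_apply, Pi.neg_apply, neg_mul]
  ring

private lemma integrable_aux (z : ℂ) (hz : -1 < z.re) {s : ℂ} (hs : 0 < s.re) :
    IntegrableOn (fun u : ℝ => (u : ℂ) ^ z * Complex.exp (-s * u)) (Set.Ioi 0) := by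
  apply Integrable.mono' ((key_integrable hs hz))
  · exact meas_aux z s
  · rw [ae_restrict_iff' measurableSet_Ioi]
    filter_upwards with u hu
    rw [norm_mul,
      Complex.norm_cpow_eq_rpow_re_of_pos hu, Complex.norm_exp]
    have : (-s * (u : ℂ)).re = -s.re * u := by simp [mul_comm]
    rw [this]

private lemma hasDeriv_aux (z : ℂ) (hz : -1 < z.re) {s₀ : ℂ} (hs : 0 < s₀.re) :
    HasDerivAt (fun s : ℂ => ∫ u in Set.Ioi (0:ℝ), (u : ℂ) ^ z * Complex.exp (-s * u))
      (∫ u in Set.Ioi (0:ℝ), (u : ℂ) ^ z * (Complex.exp (-s₀ * u) * (-u))) s₀ := by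
  set ε := s₀.re / 2 with hε
  have hε0 : 0 < ε := by positivity
  have key := hasDerivAt_integral_of_dominated_loc_of_deriv_le (μ := volume.restrict (Set.Ioi 0))
    (F := fun (s : ℂ) (u : ℝ) => (u : ℂ) ^ z * Complex.exp (-s * u))
    (F' := fun (s : ℂ) (u : ℝ) => (u : ℂ) ^ z * (Complex.exp (-s * u) * (-u)))
    (x₀ := s₀) (bound := fun u : ℝ => u ^ (z.re + 1) * Real.exp (-ε * u)) (s := ball s₀ ε) (ball_mem_nhds s₀ hε0)
    ?_ ?_ ?_ ?_ ?_ ?_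
  · exact key.2
  · filter_upwards with s
    exact meas_aux z s
  · exact integrable_aux z hz hs
  · exact meas_aux' z s₀
  · rw [ae_restrict_iff' measurableSet_Ioi]
    filter_upwards with u hu s hsb
    have hsre : ε ≤ s.re := by
      have h1 : |s.re - s₀.re| ≤ ‖s - s₀‖ := by
        simpa using Complex.abs_re_le_norm (s - s₀)
      rw [mem_ball, Complex.dist_eq] at hsb
      have := abs_le.mp h1
      have h2 : ‖s - s₀‖ < ε := hsb
      linarith [this.1]
    rw [norm_mul, norm_mul,
      Complex.norm_cpow_eq_rpow_re_of_pos hu, Complex.norm_exp]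
    have hre : (-s * (u : ℂ)).re = -s.re * u := by simp [mul_comm]
    rw [hre]
    have hnorm : ‖(-(u : ℂ))‖ = u := by
      simp [abs_of_pos (show (0:ℝ) < u from hu), (show (0:ℝ) < u from hu).le]
    rw [hnorm]
    have h1 : u ^ z.re * (Real.exp (-s.re * u) * u) ≤ u ^ z.re * (Real.exp (-ε * u) * u) := by
      apply mul_le_mul_of_nonneg_left _ (Real.rpow_nonneg hu.le _)
      apply mul_le_mul_of_nonneg_right _ hu.le
      apply Real.exp_le_exp.mpr
      have hu' : (0:ℝ) < u := hu
      nlinarith [mul_le_mul_of_nonneg_right hsre hu'.le]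
    refine h1.trans (le_of_eq ?_)
    rw [Real.rpow_add hu, Real.rpow_one]
    ring
  · have : IntegrableOn (fun u : ℝ => u ^ (z.re + 1) * Real.exp (-ε * u)) (Set.Ioi 0) :=
      key_integrable hε0 (by linarith)
    exact this
  · filter_upwards with u s _
    have h1 : HasDerivAt (fun s : ℂ => -s * u) (-u) s := by
      simpa using ((hasDerivAt_id s).neg.mul_const (u : ℂ))
    have h2 : HasDerivAt (fun s : ℂ => Complex.exp (-s * u))
        (Complex.exp (-s * u) * (-u)) s := h1.cexp
    simpa using h2.const_mul ((u : ℂ) ^ z)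

private lemma main_aux (z : ℂ) (hz : -1 < z.re) {s : ℂ} (hs : 0 < s.re) :
    ∫ u in Set.Ioi (0:ℝ), (u : ℂ) ^ z * Complex.exp (-s * u)
      = Complex.Gamma (z + 1) / s ^ (z + 1) := by
  set U : Set ℂ := {w : ℂ | 0 < w.re} with hU
  have hUopen : IsOpen U := isOpen_lt continuous_const Complex.continuous_re
  have hUconn : IsPreconnected U := (convex_halfSpace_re_gt 0).isPreconnected
  set F : ℂ → ℂ := fun w => ∫ u in Set.Ioi (0:ℝ), (u : ℂ) ^ z * Complex.exp (-w * u) with hF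
  set G : ℂ → ℂ := fun w => Complex.Gamma (z + 1) / w ^ (z + 1) with hG
  have hFan : AnalyticOnNhd ℂ F U := by
    refine DifferentiableOn.analyticOnNhd (fun w hw => ?_) hUopen
    exact (hasDeriv_aux z hz hw).differentiableAt.differentiableWithinAt
  have hGan : AnalyticOnNhd ℂ G U := by
    refine DifferentiableOn.analyticOnNhd (fun w hw => ?_) hUopen
    have hw' : (0:ℝ) < w.re := hw
    have h1 : DifferentiableAt ℂ (fun w : ℂ => w ^ (z + 1)) w :=
      ((hasDerivAt_id w).cpow_const (Or.inl hw')).differentiableAt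
    have h2 : w ^ (z + 1) ≠ 0 := by
      intro h
      rw [Complex.cpow_eq_zero_iff] at h
      have : w ≠ 0 := fun h0 => by simp [h0] at hw'
      exact this h.1
    exact ((differentiableAt_const _).div h1 h2).differentiableWithinAt
  have hreal : ∀ r : ℝ, 0 < r → F r = G r := by
    intro r hr
    have h := Complex.integral_cpow_mul_exp_neg_mul_Ioi
      (a := z + 1) (r := r) (by simp only [Complex.add_re, Complex.one_re]; linarith) hr
    simp only [add_sub_cancel_right] at h
    have hFr : F r = (1 / (r : ℂ)) ^ (z + 1) * Complex.Gamma (z + 1) := by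
      rw [hF, ← h]
      refine setIntegral_congr_fun measurableSet_Ioi (fun u hu => ?_)
      rw [neg_mul]
    have harg : (r : ℂ).arg ≠ Real.pi := by
      rw [Complex.arg_ofReal_of_nonneg hr.le]
      exact fun h => Real.pi_ne_zero h.symm
    rw [hFr]
    simp only [hG]
    rw [one_div, Complex.inv_cpow _ _ harg, div_eq_mul_inv, mul_comm]
  have hfreq : ∃ᶠ w in nhdsWithin (1 : ℂ) {(1:ℂ)}ᶜ, F w = G w := by
    have htend : Tendsto (fun n : ℕ => (((1 + 1/(n+1) : ℝ)) : ℂ)) atTop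
        (nhdsWithin (1 : ℂ) {(1:ℂ)}ᶜ) := by
      apply tendsto_nhdsWithin_of_tendsto_nhds_of_eventually_within
      · have h0 : Tendsto (fun n : ℕ => (1 + 1/(n+1) : ℝ)) atTop (nhds 1) := by
          have h1 : Tendsto (fun n : ℕ => 1 / ((n : ℝ) + 1)) atTop (nhds 0) :=
            tendsto_one_div_add_atTop_nhds_zero_nat
          simpa using (tendsto_const_nhds (x := (1:ℝ))).add h1
        have h2 := (Complex.continuous_ofReal.tendsto (1:ℝ)).comp h0
        rw [show ((1:ℝ):ℂ) = (1:ℂ) from Complex.ofReal_one] at h2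
        exact h2
      · filter_upwards with n
        simp only [Set.mem_compl_iff, Set.mem_singleton_iff]
        intro h
        rw [show ((1:ℂ)) = ((1:ℝ):ℂ) by norm_num, Complex.ofReal_inj] at h
        have hpos : (0:ℝ) < 1/(n+1) := by positivity
        linarith
    exact htend.frequently (Frequently.of_forall fun n => hreal _ (by positivity))
  have h1U : (1 : ℂ) ∈ U := by simp [hU]
  have := hFan.eqOn_of_preconnected_of_frequently_eq hGan hUconn h1U hfreq
  exact this hs

/-- For `-1 < Re z < 0` and `τ > 0`, the integral
`∫_0^∞ u^z e^{-τu} e^{-iux} du = Γ(z+1) / (i(x - iτ))^{z+1}` (principal branch). -/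
theorem integral_rpow_exp_eq_gamma_div
    (z : ℂ) (hz1 : -1 < z.re) (hz2 : z.re < 0) (τ : ℝ) (hτ : 0 < τ) (x : ℝ) :
    ∫ u in Set.Ioi (0 : ℝ),
        (u : ℂ) ^ z * Complex.exp (-(τ : ℂ) * u) * Complex.exp (-Complex.I * u * x)
      = Complex.Gamma (z + 1) / (Complex.I * ((x : ℂ) - Complex.I * τ)) ^ (z + 1) := by
  set s : ℂ := Complex.I * ((x : ℂ) - Complex.I * τ) with hsdef
  have hsre : 0 < s.re := by
    simp [hsdef, Complex.mul_re]
    exact hτ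
  have heq : ∀ u : ℝ,
      (u : ℂ) ^ z * Complex.exp (-(τ : ℂ) * u) * Complex.exp (-Complex.I * u * x)
        = (u : ℂ) ^ z * Complex.exp (-s * u) := by
    intro u
    rw [mul_assoc, ← Complex.exp_add]
    congr 1
    have hs2 : s = (τ : ℂ) + Complex.I * x := by
      rw [hsdef, mul_sub, ← mul_assoc, Complex.I_mul_I]
      ring
    rw [hs2]
    push_cast
    ring
  simp_rw [heq]
  exact main_aux z hz1 hsre
end

section
/- Let K_η(ζ) = (2π)^{-n} e^{-nη} (1-ω)^{-n} exp(-((1+ω)/(1-ω)) |ζ|²/4) with ω = e^{-2η} and η = r + it, r > 0. Then |K_η(ζ)| ≤ 2 / |sin t|^n for all ζ ∈ ℂ^n, uniformly in r > 0 (for t not a multiple of π). -/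
open Complex

/-- The kernel of the special Hermite (twisted Laplacian) semigroup:
`K_η(ζ) = (2π)^{-n} e^{-nη} (1-ω)^{-n} exp(-((1+ω)/(1-ω)) |ζ|²/4)` with `ω = e^{-2η}`. -/
noncomputable def specialHermiteKernel (n : ℕ) (η : ℂ) (ζ : EuclideanSpace ℂ (Fin n)) : ℂ :=
  ((2 * Real.pi : ℝ) : ℂ) ^ (-(n : ℤ)) * Complex.exp (-(n : ℂ) * η) *
    (1 - Complex.exp (-2 * η)) ^ (-(n : ℤ)) *
    Complex.exp (-((1 + Complex.exp (-2 * η)) / (1 - Complex.exp (-2 * η))) *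
      ((‖ζ‖ ^ 2 : ℝ) / 4))

set_option maxHeartbeats 1000000

/-- `|K_{r+it}(ζ)| ≤ 2/|sin t|^n` for all `ζ ∈ ℂⁿ`, uniformly in `r > 0`,
whenever `sin t ≠ 0`. -/
theorem specialHermiteKernel_bound (n : ℕ) (hn : 1 ≤ n) (r t : ℝ) (hr : 0 < r)
    (ht : Real.sin t ≠ 0) (ζ : EuclideanSpace ℂ (Fin n)) :
    ‖specialHermiteKernel n (r + t * Complex.I) ζ‖ ≤ 2 / |Real.sin t| ^ n := by
  have hnormexp : ∀ z : ℂ, ‖Complex.exp z‖ = Real.exp z.re := fun z => by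
    rw [Complex.norm_exp]
  set η : ℂ := r + t * Complex.I with hη
  have hre : (-2 * η).re = -2 * r := by simp [hη]
  have him : (-2 * η).im = -2 * t := by simp [hη]
  set ω : ℂ := Complex.exp (-2 * η) with hω
  have hωre : ω.re = Real.exp (-2 * r) * Real.cos (2 * t) := by
    rw [hω, Complex.exp_re, hre, him]
    rw [show (-2 : ℝ) * t = -(2 * t) by ring, Real.cos_neg]
  have hωim : ω.im = -(Real.exp (-2 * r) * Real.sin (2 * t)) := by
    rw [hω, Complex.exp_im, hre, him]
    rw [show (-2 : ℝ) * t = -(2 * t) by ring, Real.sin_neg]; ring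
  set a : ℝ := Real.exp (-r) with ha
  have ha0 : 0 < a := Real.exp_pos _
  have ha2 : Real.exp (-2 * r) = a ^ 2 := by
    rw [ha, sq, ← Real.exp_add]; ring_nf
  have ha1 : a < 1 := by
    rw [ha, Real.exp_lt_one_iff]; linarith
  set S : ℝ := |Real.sin t| with hS
  have hs0 : 0 < S := abs_pos.mpr ht
  -- lower bound on normSq (1 - ω)
  have hkey : (2 * a * S) ^ 2 ≤ Complex.normSq (1 - ω) := by
    rw [Complex.normSq_apply]
    simp only [Complex.sub_re, Complex.sub_im, Complex.one_re, Complex.one_im, hωre, hωim, ha2]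
    have h1 := Real.sin_sq_add_cos_sq (2 * t)
    have h2 := Real.cos_two_mul t
    have h3 := Real.sin_sq_add_cos_sq t
    have h4 : S ^ 2 = Real.sin t ^ 2 := sq_abs _
    nlinarith [sq_nonneg (1 - a ^ 2), sq_nonneg a, sq_nonneg (a * Real.sin (2 * t))]
  have hLpos : (0 : ℝ) < 2 * a * S := by positivity
  have hnorm_lb : 2 * a * S ≤ ‖1 - ω‖ := by
    have h2 : ‖1 - ω‖ ^ 2 = Complex.normSq (1 - ω) := by
      rw [Complex.sq_norm]
    nlinarith [norm_nonneg (1 - ω), hkey]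
  have hnormpos : 0 < ‖1 - ω‖ := lt_of_lt_of_le hLpos hnorm_lb
  have hωne : (1 - ω) ≠ 0 := by
    intro h; rw [h, norm_zero] at hnormpos; exact lt_irrefl 0 hnormpos
  -- real part of (1+ω)/(1-ω) is nonnegative
  have hsre : 0 ≤ ((1 + ω) / (1 - ω)).re := by
    rw [Complex.div_re]
    have hns : 0 < Complex.normSq (1 - ω) := Complex.normSq_pos.mpr hωne
    have hnsq : Complex.normSq ω = ω.re ^ 2 + ω.im ^ 2 := by rw [Complex.normSq_apply]; ring
    have hω1 : Complex.normSq ω < 1 := by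
      rw [hnsq, hωre, hωim, ha2]
      have h1 := Real.sin_sq_add_cos_sq (2 * t)
      have haa : a ^ 2 < 1 := by nlinarith
      nlinarith [sq_nonneg (a ^ 2), sq_nonneg (a ^ 2 * Real.sin (2 * t)), sq_nonneg (a ^ 2 * Real.cos (2 * t))]
    have hnum : 0 ≤ (1 + ω).re * (1 - ω).re + (1 + ω).im * (1 - ω).im := by
      simp only [Complex.add_re, Complex.add_im, Complex.sub_re, Complex.sub_im,
        Complex.one_re, Complex.one_im]
      nlinarith [hnsq ▸ hω1]
    rw [← add_div]
    exact div_nonneg hnum hns.le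
  -- compute the norm
  have hre2 : (-(n : ℂ) * η).re = -(n : ℝ) * r := by simp [hη]
  have hcast : ((‖ζ‖ ^ 2 : ℝ) : ℂ) / 4 = ((‖ζ‖ ^ 2 / 4 : ℝ) : ℂ) := by push_cast; ring
  have hre3 : (-((1 + ω) / (1 - ω)) * (((‖ζ‖ ^ 2 : ℝ) : ℂ) / 4)).re =
      -((1 + ω) / (1 - ω)).re * (‖ζ‖ ^ 2 / 4) := by
    rw [hcast, Complex.mul_re, Complex.ofReal_re, Complex.ofReal_im, mul_zero, sub_zero,
      Complex.neg_re]
  have hnormK : ‖specialHermiteKernel n η ζ‖ =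
      (2 * Real.pi) ^ (-(n : ℤ)) * Real.exp (-(n : ℝ) * r) * ‖1 - ω‖ ^ (-(n : ℤ)) *
        Real.exp (-((1 + ω) / (1 - ω)).re * (‖ζ‖ ^ 2 / 4)) := by
    rw [specialHermiteKernel, norm_mul, norm_mul, norm_mul, norm_zpow, norm_zpow,
      hnormexp, hnormexp, Complex.norm_real, Real.norm_eq_abs,
      abs_of_pos (by positivity : (0:ℝ) < 2 * Real.pi), hre2, hre3]
  rw [hnormK]
  have hpi : (2 * Real.pi) ^ (-(n : ℤ)) ≤ (1 : ℝ) := by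
    rw [zpow_neg, zpow_natCast, inv_le_one_iff₀]
    right
    exact one_le_pow₀ (by linarith [Real.pi_gt_three])
  have hpi0 : (0 : ℝ) ≤ (2 * Real.pi) ^ (-(n : ℤ)) := by positivity
  have hE : Real.exp (-((1 + ω) / (1 - ω)).re * (‖ζ‖ ^ 2 / 4)) ≤ 1 := by
    rw [Real.exp_le_one_iff]
    have h0 : (0:ℝ) ≤ ‖ζ‖ ^ 2 / 4 := by positivity
    nlinarith
  have hexp_a : Real.exp (-(n : ℝ) * r) = a ^ n := by
    rw [ha, ← Real.exp_nat_mul]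
    congr 1; ring
  have hZ : Real.exp (-(n : ℝ) * r) * ‖1 - ω‖ ^ (-(n : ℤ)) ≤ (S ^ n)⁻¹ := by
    rw [zpow_neg, zpow_natCast, hexp_a]
    calc a ^ n * (‖1 - ω‖ ^ n)⁻¹
        ≤ a ^ n * ((2 * a * S) ^ n)⁻¹ := by gcongr
      _ = (2 ^ n)⁻¹ * (S ^ n)⁻¹ := by
          rw [mul_pow, mul_pow]
          field_simp
      _ ≤ 1 * (S ^ n)⁻¹ := by
          apply mul_le_mul_of_nonneg_right _ (by positivity)
          rw [inv_le_one_iff₀]; right; exact one_le_pow₀ (by norm_num)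
      _ = (S ^ n)⁻¹ := one_mul _
  calc (2 * Real.pi) ^ (-(n : ℤ)) * Real.exp (-(n : ℝ) * r) * ‖1 - ω‖ ^ (-(n : ℤ)) *
        Real.exp (-((1 + ω) / (1 - ω)).re * (‖ζ‖ ^ 2 / 4))
      = ((2 * Real.pi) ^ (-(n : ℤ)) * (Real.exp (-(n : ℝ) * r) * ‖1 - ω‖ ^ (-(n : ℤ)))) *
        Real.exp (-((1 + ω) / (1 - ω)).re * (‖ζ‖ ^ 2 / 4)) := by ring
    _ ≤ (1 * (S ^ n)⁻¹) * 1 := by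
        apply mul_le_mul _ hE (Real.exp_pos _).le (by positivity)
        exact mul_le_mul hpi hZ (by positivity) zero_le_one
    _ = (S ^ n)⁻¹ := by ring
    _ ≤ 2 / S ^ n := by
        rw [div_eq_mul_inv]
        nlinarith [inv_pos.mpr (pow_pos hs0 n)]
end

section
/- For -1 < Re(z) < 0 and any Schwartz function φ on ℝ, the limit as z → -1 (along the real axis) of (1/Γ(z+1)) ∫_0^∞ x^z φ(x) dx equals φ(0). -/
open MeasureTheory Filter

/-- For a Schwartz function `φ` on `ℝ`, the limit as `z → -1` (along real
`z ∈ (-1,0)`) of `(1/Γ(z+1)) ∫_0^∞ x^z φ(x) dx` is `φ(0)`; i.e. `x₊^z/Γ(z+1) → δ₀`. -/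
theorem dirac_limit_xz_over_gamma (φ : SchwartzMap ℝ ℂ) :
    Tendsto
      (fun z : ℝ => (1 / Real.Gamma (z + 1)) • ∫ x in Set.Ioi (0 : ℝ), (x ^ z : ℝ) • φ x)
      (nhdsWithin (-1 : ℝ) (Set.Ioo (-1 : ℝ) 0))
      (nhds (φ 0)) := by
  -- bounds on φ and its derivative
  obtain ⟨M, hM0, hM⟩ := φ.decay 0 0
  have hMb : ∀ x : ℝ, ‖φ x‖ ≤ M := by
    intro x; have := hM x; simpa using this
  obtain ⟨C, hC0, hC⟩ := φ.decay 0 1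
  have hCb : ∀ x : ℝ, ‖fderiv ℝ φ x‖ ≤ C := by
    intro x
    have h := hC x
    simp only [pow_zero, one_mul] at h
    rwa [← norm_iteratedFDeriv_fderiv, norm_iteratedFDeriv_zero] at h
  have hlip : ∀ x ∈ Set.Icc (0:ℝ) 1, ‖φ x - φ 0‖ ≤ C * x := by
    intro x hx
    have := Convex.norm_image_sub_le_of_norm_fderiv_le
      (f := ⇑φ) (C := C) (s := Set.univ) (𝕜 := ℝ)
      (fun y _ => (φ.differentiable).differentiableAt)
      (fun y _ => hCb y) convex_univ (Set.mem_univ 0) (Set.mem_univ x)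
    calc ‖φ x - φ 0‖ ≤ C * ‖x - 0‖ := this
      _ = C * |x| := by simp [Real.norm_eq_abs]
      _ = C * x := by rw [abs_of_nonneg hx.1]
  set K := ∫ x in Set.Ioi (1:ℝ), ‖φ x‖ with hK
  -- integrability facts
  have hcont : ∀ z : ℝ, ContinuousOn (fun x : ℝ => (x ^ z : ℝ)) (Set.Ioi (0:ℝ)) :=
    fun z => continuousOn_id.rpow_const (fun x hx => Or.inl (ne_of_gt hx))
  have hint0 : ∀ z ∈ Set.Ioo (-1:ℝ) 0,
      IntegrableOn (fun x : ℝ => (x ^ z : ℝ) • φ x) (Set.Ioc (0:ℝ) 1) := by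
    intro z hz
    apply Integrable.mono' (g := fun x : ℝ => M * x ^ z)
    · exact ((intervalIntegral.intervalIntegrable_rpow' (a := 0) (b := 1) hz.1).1).const_mul M
    · apply ContinuousOn.aestronglyMeasurable _ measurableSet_Ioc
      exact (((hcont z).mono Set.Ioc_subset_Ioi_self).smul φ.continuous.continuousOn)
    · filter_upwards [ae_restrict_mem measurableSet_Ioc] with x hx
      rw [norm_smul, Real.norm_eq_abs, abs_of_nonneg (Real.rpow_nonneg (le_of_lt hx.1) z)]
      exact le_trans (mul_le_mul_of_nonneg_left (hMb x) (Real.rpow_nonneg (le_of_lt hx.1) z))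
        (le_of_eq (mul_comm _ _))
  have hle1 : ∀ z ∈ Set.Ioo (-1:ℝ) 0, ∀ x ∈ Set.Ioi (1:ℝ),
      ‖(x ^ z : ℝ) • φ x‖ ≤ ‖φ x‖ := by
    intro z hz x hx
    rw [norm_smul, Real.norm_eq_abs,
      abs_of_nonneg (Real.rpow_nonneg (by linarith [Set.mem_Ioi.1 hx]) z)]
    have : (x:ℝ) ^ z ≤ 1 :=
      Real.rpow_le_one_of_one_le_of_nonpos (le_of_lt (Set.mem_Ioi.1 hx)) (le_of_lt hz.2)
    nlinarith [norm_nonneg (φ x)]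
  have hint1 : ∀ z ∈ Set.Ioo (-1:ℝ) 0,
      IntegrableOn (fun x : ℝ => (x ^ z : ℝ) • φ x) (Set.Ioi (1:ℝ)) := by
    intro z hz
    apply Integrable.mono' (g := fun x : ℝ => ‖φ x‖)
    · exact (φ.integrable (μ := volume)).norm.integrableOn
    · apply ContinuousOn.aestronglyMeasurable _ measurableSet_Ioi
      exact (((hcont z).mono (fun x hx => Set.mem_Ioi.2 (lt_trans one_pos (Set.mem_Ioi.1 hx)))).smul φ.continuous.continuousOn)
    · filter_upwards [ae_restrict_mem measurableSet_Ioi] with x hx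
      exact hle1 z hz x hx
  have hintA : ∀ z ∈ Set.Ioo (-1:ℝ) 0,
      IntegrableOn (fun x : ℝ => (x ^ z : ℝ) • (φ x - φ 0)) (Set.Ioc (0:ℝ) 1) := by
    intro z hz
    apply Integrable.mono' (g := fun _ : ℝ => C)
    · exact integrableOn_const measure_Ioc_lt_top.ne
    · apply ContinuousOn.aestronglyMeasurable _ measurableSet_Ioc
      exact (((hcont z).mono Set.Ioc_subset_Ioi_self).smul
        (φ.continuous.sub continuous_const).continuousOn)
    · filter_upwards [ae_restrict_mem measurableSet_Ioc] with x hx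
      have hx0 : (0:ℝ) < x := hx.1
      rw [norm_smul, Real.norm_eq_abs, abs_of_nonneg (Real.rpow_nonneg hx0.le z)]
      calc x ^ z * ‖φ x - φ 0‖ ≤ x ^ z * (C * x) := by
            apply mul_le_mul_of_nonneg_left (hlip x ⟨hx0.le, hx.2⟩)
              (Real.rpow_nonneg hx0.le z)
        _ = C * x ^ (z + 1) := by
            rw [Real.rpow_add hx0, Real.rpow_one]; ring
        _ ≤ C * 1 := by
            apply mul_le_mul_of_nonneg_left _ hC0.le
            exact Real.rpow_le_one hx0.le hx.2 (by linarith [hz.1])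
        _ = C := mul_one C
  -- norm bound for A z
  have hAbound : ∀ z ∈ Set.Ioo (-1:ℝ) 0,
      ‖∫ x in Set.Ioc (0:ℝ) 1, (x ^ z : ℝ) • (φ x - φ 0)‖ ≤ C := by
    intro z hz
    have := norm_setIntegral_le_of_norm_le_const (C := C)
      (f := fun x : ℝ => (x ^ z : ℝ) • (φ x - φ 0)) (s := Set.Ioc (0:ℝ) 1)
      (μ := volume) measure_Ioc_lt_top ?_
    · simpa [Real.volume_real_Ioc] using this
    · intro x hx
      have hx0 : (0:ℝ) < x := hx.1
      rw [norm_smul, Real.norm_eq_abs, abs_of_nonneg (Real.rpow_nonneg hx0.le z)]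
      calc x ^ z * ‖φ x - φ 0‖ ≤ x ^ z * (C * x) :=
            mul_le_mul_of_nonneg_left (hlip x ⟨hx0.le, hx.2⟩) (Real.rpow_nonneg hx0.le z)
        _ = C * x ^ (z + 1) := by rw [Real.rpow_add hx0, Real.rpow_one]; ring
        _ ≤ C * 1 := mul_le_mul_of_nonneg_left
            (Real.rpow_le_one hx0.le hx.2 (by linarith [hz.1])) hC0.le
        _ = C := mul_one C
  -- norm bound for B z
  have hBbound : ∀ z ∈ Set.Ioo (-1:ℝ) 0,
      ‖∫ x in Set.Ioi (1:ℝ), (x ^ z : ℝ) • φ x‖ ≤ K := by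
    intro z hz
    calc ‖∫ x in Set.Ioi (1:ℝ), (x ^ z : ℝ) • φ x‖
        ≤ ∫ x in Set.Ioi (1:ℝ), ‖(x ^ z : ℝ) • φ x‖ := norm_integral_le_integral_norm _
      _ ≤ K := by
          apply setIntegral_mono_on (hint1 z hz).norm
            ((φ.integrable (μ := volume)).norm.integrableOn) measurableSet_Ioi
          exact hle1 z hz
  -- the key algebraic identity
  have key : ∀ z ∈ Set.Ioo (-1:ℝ) 0,
      ((1 / Real.Gamma (z + 1)) • ∫ x in Set.Ioi (0 : ℝ), (x ^ z : ℝ) • φ x)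
      = (1 / Real.Gamma (z + 2)) • φ 0
        + (1 / Real.Gamma (z + 1)) •
          ((∫ x in Set.Ioc (0:ℝ) 1, (x ^ z : ℝ) • (φ x - φ 0))
            + ∫ x in Set.Ioi (1:ℝ), (x ^ z : ℝ) • φ x) := by
    intro z hz
    have hz1 : (0:ℝ) < z + 1 := by linarith [hz.1]
    have hsplit : (∫ x in Set.Ioi (0 : ℝ), (x ^ z : ℝ) • φ x)
        = (∫ x in Set.Ioc (0:ℝ) 1, (x ^ z : ℝ) • φ x)
          + ∫ x in Set.Ioi (1:ℝ), (x ^ z : ℝ) • φ x := by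
      rw [← Set.Ioc_union_Ioi_eq_Ioi (zero_le_one), setIntegral_union
        (Set.Ioc_disjoint_Ioi le_rfl) measurableSet_Ioi (hint0 z hz) (hint1 z hz)]
    have hconstint : IntegrableOn (fun x : ℝ => (x ^ z : ℝ) • φ 0) (Set.Ioc (0:ℝ) 1) :=
      ((intervalIntegral.intervalIntegrable_rpow' (a := 0) (b := 1) hz.1).1).smul_const (φ 0)
    have hmid : (∫ x in Set.Ioc (0:ℝ) 1, (x ^ z : ℝ) • φ x)
        = (∫ x in Set.Ioc (0:ℝ) 1, (x ^ z : ℝ) • (φ x - φ 0))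
          + (1 / (z + 1)) • φ 0 := by
      have h1 : (∫ x in Set.Ioc (0:ℝ) 1, (x ^ z : ℝ) • φ x)
          = (∫ x in Set.Ioc (0:ℝ) 1, ((x ^ z : ℝ) • (φ x - φ 0) + (x ^ z : ℝ) • φ 0)) := by
        congr 1; ext x; rw [← smul_add]; congr 1; abel
      rw [h1, integral_add (hintA z hz) hconstint]
      congr 1
      rw [integral_smul_const]
      congr 1
      rw [← intervalIntegral.integral_of_le zero_le_one,
        integral_rpow (Or.inl hz.1), Real.one_rpow,
        Real.zero_rpow (ne_of_gt hz1)]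
      ring
    have hGamma : Real.Gamma (z + 2) = (z + 1) * Real.Gamma (z + 1) := by
      have := Real.Gamma_add_one (s := z + 1) (ne_of_gt hz1)
      rw [show z + 1 + 1 = z + 2 by ring] at this
      exact this
    have hGpos : 0 < Real.Gamma (z + 1) := Real.Gamma_pos_of_pos hz1
    rw [hsplit, hmid]
    have hc : (1 / Real.Gamma (z+1) * (1/(z+1)) : ℝ) = 1 / ((z+1) * Real.Gamma (z+1)) := by
      rw [div_mul_div_comm, one_mul, mul_comm]
    rw [smul_add, smul_add, smul_smul, hGamma, hc, smul_add]
    abel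
  -- limits
  have hG1 : ContinuousAt (fun z : ℝ => Real.Gamma (z + 2)) (-1) := by
    have hd : DifferentiableAt ℝ Real.Gamma ((-1:ℝ) + 2) := by
      apply Real.differentiableAt_Gamma
      intro m h
      have : (0:ℝ) ≤ (m:ℝ) := Nat.cast_nonneg m
      linarith
    exact ContinuousAt.comp (g := Real.Gamma) (f := fun z : ℝ => z + 2) (x := (-1:ℝ))
      hd.continuousAt (continuousAt_id.add continuousAt_const)
  have h1 : Real.Gamma ((-1:ℝ) + 2) = 1 := by norm_num [Real.Gamma_one]
  have hT1 : Tendsto (fun z : ℝ => (1 / Real.Gamma (z + 2)) • φ 0)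
      (nhdsWithin (-1 : ℝ) (Set.Ioo (-1 : ℝ) 0)) (nhds (φ 0)) := by
    have hca : ContinuousAt (fun z : ℝ => (1 / Real.Gamma (z + 2)) • φ 0) (-1) :=
      (continuousAt_const.div hG1 (by rw [h1]; norm_num)).smul continuousAt_const
    have := hca.tendsto.mono_left (nhdsWithin_le_nhds (s := Set.Ioo (-1:ℝ) 0))
    simpa [h1] using this
  have hG0 : Tendsto (fun z : ℝ => 1 / Real.Gamma (z + 1))
      (nhdsWithin (-1 : ℝ) (Set.Ioo (-1 : ℝ) 0)) (nhds 0) := by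
    have heq : ∀ᶠ z in nhdsWithin (-1:ℝ) (Set.Ioo (-1) 0),
        (z + 1) / Real.Gamma (z + 2) = 1 / Real.Gamma (z + 1) := by
      filter_upwards [self_mem_nhdsWithin] with z hz
      have hz1 : (0:ℝ) < z + 1 := by linarith [hz.1]
      have hGpos : 0 < Real.Gamma (z + 1) := Real.Gamma_pos_of_pos hz1
      have hGamma : Real.Gamma (z + 2) = (z + 1) * Real.Gamma (z + 1) := by
        have := Real.Gamma_add_one (s := z + 1) (ne_of_gt hz1)
        rw [show z + 1 + 1 = z + 2 by ring] at this; exact this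
      rw [hGamma]
      rw [div_mul_eq_div_div, div_self (ne_of_gt hz1)]
    apply Tendsto.congr' heq
    have hca : ContinuousAt (fun z : ℝ => (z + 1) / Real.Gamma (z + 2)) (-1) :=
      (by fun_prop : ContinuousAt (fun z : ℝ => z + 1) (-1)).div hG1 (by rw [h1]; norm_num)
    have := hca.tendsto.mono_left (nhdsWithin_le_nhds (s := Set.Ioo (-1:ℝ) 0))
    simpa using this
  have hT2 : Tendsto (fun z : ℝ => (1 / Real.Gamma (z + 1)) •
      ((∫ x in Set.Ioc (0:ℝ) 1, (x ^ z : ℝ) • (φ x - φ 0))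
        + ∫ x in Set.Ioi (1:ℝ), (x ^ z : ℝ) • φ x))
      (nhdsWithin (-1 : ℝ) (Set.Ioo (-1 : ℝ) 0)) (nhds 0) := by
    have hbd : ∀ᶠ z in nhdsWithin (-1:ℝ) (Set.Ioo (-1) 0),
        ‖(1 / Real.Gamma (z + 1)) •
          ((∫ x in Set.Ioc (0:ℝ) 1, (x ^ z : ℝ) • (φ x - φ 0))
            + ∫ x in Set.Ioi (1:ℝ), (x ^ z : ℝ) • φ x)‖
          ≤ |1 / Real.Gamma (z + 1)| * (C + K) := by
      filter_upwards [self_mem_nhdsWithin] with z hz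
      rw [norm_smul, Real.norm_eq_abs]
      apply mul_le_mul_of_nonneg_left _ (abs_nonneg _)
      exact le_trans (norm_add_le _ _) (add_le_add (hAbound z hz) (hBbound z hz))
    have hg : Tendsto (fun z : ℝ => |1 / Real.Gamma (z + 1)| * (C + K))
        (nhdsWithin (-1 : ℝ) (Set.Ioo (-1 : ℝ) 0)) (nhds 0) := by
      have := (hG0.abs).mul_const (C + K)
      simpa using this
    exact squeeze_zero_norm' hbd hg
  have hfinal := hT1.add hT2
  rw [add_zero] at hfinal
  apply Tendsto.congr' _ hfinal
  filter_upwards [self_mem_nhdsWithin] with z hz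
  exact (key z hz).symm
end
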